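/- Let t, r be independent complex random variables with ln|t| ~ N(0, δ_t²), arg t ~ U(−θ_t, θ_t), ln|r| ~ N(0, δ_r²), arg r ~ U(−θ_r, θ_r), amplitudes and phases all independent. Then E[|t − α·r|²] = e^{2δ_t²} + |α|²·e^{2δ_r²} − 2·Re(α*)·sinc(θ_t)·sinc(θ_r)·e^{(δ_t²+δ_r²)/2} for any complex α, and in particular with α = E[t/r] = E[t]·E[1/r] = sinc(θ_t)·sinc(θ_r)·e^{(δ_t²+δ_r²)/2} (using E[1/r] = sinc(θ_r)e^{δ_r²/2}), E[|t − α r|²] = e^{2δ_t²} + sinc²(θ_t)·sinc²(θ_r)·e^{δ_t²+δ_r²}·(e^{2δ_r²} − 2). -/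

import Mathlib

open MeasureTheory ProbabilityTheory

/-- The symmetric uniform distribution on `[−θ, θ]`. -/
noncomputable def unifSym (θ : ℝ) : Measure ℝ :=
  (ENNReal.ofReal (2 * θ))⁻¹ • volume.restrict (Set.Ioc (-θ) θ)

section helpers

open Real Complex

lemma gaussian_exp_moment (c : ℝ) (v : NNReal) :
    Integrable (fun x => Real.exp (c * x)) (gaussianReal 0 v) ∧
    ∫ x, Real.exp (c * x) ∂(gaussianReal 0 v) = Real.exp (c ^ 2 * v / 2) := by
  rcases eq_or_ne v 0 with hv | hv
  · subst hv
    rw [gaussianReal_zero_var]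
    refine ⟨?_, ?_⟩
    · refine ⟨(Real.continuous_exp.comp (continuous_const.mul continuous_id)).aestronglyMeasurable, ?_⟩
      rw [HasFiniteIntegral, lintegral_dirac]
      exact ENNReal.coe_lt_top
    · rw [integral_dirac]; simp
  have hv' : (0 : ℝ) < v := lt_of_le_of_ne v.2 (by exact_mod_cast (Ne.symm hv))
  have hmeas : AEMeasurable (fun x => (gaussianPDFReal 0 v x).toNNReal) (volume : Measure ℝ) :=
    ((measurable_gaussianPDFReal 0 v).real_toNNReal).aemeasurable
  have hpdf : gaussianPDF 0 v = fun x => ((gaussianPDFReal 0 v x).toNNReal : ENNReal) := by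
    funext x; rw [gaussianPDF_def]; simp [ENNReal.ofReal]
  have hpt : ∀ x : ℝ, gaussianPDFReal 0 v x * Real.exp (c * x)
      = Real.exp (c ^ 2 * v / 2) * ((√(2 * π * v))⁻¹ * Real.exp (-(2 * v : ℝ)⁻¹ * (x - c * v) ^ 2)) := by
    intro x
    rw [gaussianPDFReal,
      show Real.exp (c ^ 2 * v / 2) * ((√(2 * π * v))⁻¹ * Real.exp (-(2 * v : ℝ)⁻¹ * (x - c * v) ^ 2))
        = (√(2 * π * v))⁻¹ * (Real.exp (-(2 * v : ℝ)⁻¹ * (x - c * v) ^ 2) * Real.exp (c ^ 2 * v / 2)) from by ring,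
      mul_assoc, ← Real.exp_add, ← Real.exp_add]
    congr 2
    field_simp
    ring
  have hb : (0:ℝ) < (2 * v : ℝ)⁻¹ := by positivity
  have hint : Integrable (fun x => gaussianPDFReal 0 v x * Real.exp (c * x)) (volume : Measure ℝ) := by
    simp_rw [hpt]
    exact (((integrable_exp_neg_mul_sq hb).comp_sub_right (c * v)).const_mul _).const_mul _
  have hval : ∫ x, gaussianPDFReal 0 v x * Real.exp (c * x) = Real.exp (c ^ 2 * v / 2) := by
    simp_rw [hpt, integral_const_mul]
    rw [integral_sub_right_eq_self (μ := volume) (fun a => Real.exp (-(2 * v : ℝ)⁻¹ * a ^ 2)) (c * v)]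
    rw [integral_gaussian]
    rw [← Real.sqrt_inv, ← Real.sqrt_mul (by positivity)]
    have : (2 * π * v)⁻¹ * (π / (2 * v : ℝ)⁻¹) = 1 := by field_simp
    rw [this, Real.sqrt_one, mul_one]
  rw [gaussianReal_of_var_ne_zero 0 hv, hpdf]
  constructor
  · rw [integrable_withDensity_iff_integrable_smul₀ hmeas]
    refine hint.congr (ae_of_all _ fun x => ?_)
    simp [NNReal.smul_def, Real.coe_toNNReal _ (gaussianPDFReal_nonneg 0 v x)]
  · rw [integral_withDensity_eq_integral_smul₀ hmeas]
    rw [← hval]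
    refine integral_congr_ae (ae_of_all _ fun x => ?_)
    simp [NNReal.smul_def, Real.coe_toNNReal _ (gaussianPDFReal_nonneg 0 v x)]

lemma unifSym_prob {θ : ℝ} (hθ : 0 < θ) : IsProbabilityMeasure (unifSym θ) := by
  constructor
  rw [unifSym, Measure.smul_apply, Measure.restrict_apply MeasurableSet.univ,
    Set.univ_inter, Real.volume_Ioc, smul_eq_mul,
    show θ - -θ = 2 * θ by ring]
  exact ENNReal.inv_mul_cancel (by simp [hθ]) ENNReal.ofReal_ne_top

lemma unifSym_phase {θ : ℝ} (hθ : 0 < θ) :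
    ∫ x : ℝ, Complex.exp (Complex.I * x) ∂(unifSym θ) = ((Real.sin θ / θ : ℝ) : ℂ) := by
  have hle : -θ ≤ θ := by linarith
  rw [unifSym, integral_smul_measure,
    ← intervalIntegral.integral_of_le hle,
    integral_exp_mul_complex Complex.I_ne_zero]
  rw [ENNReal.toReal_inv, ENNReal.toReal_ofReal (by linarith)]
  have hI := Complex.I_ne_zero
  have hθ' : (θ : ℂ) ≠ 0 := by exact_mod_cast (ne_of_gt hθ)
  rw [Complex.ofReal_div, Complex.ofReal_sin, Complex.sin, Complex.ofReal_neg]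
  simp only [Complex.real_smul]
  push_cast
  field_simp
  ring_nf
  rw [Complex.I_sq]; ring

lemma ProbabilityTheory.IndepFun.integral_mul_complex {Ω : Type*} [MeasurableSpace Ω] {P : Measure Ω}
    [IsProbabilityMeasure P] {f g : Ω → ℂ}
    (h : IndepFun f g P) (hf : Integrable f P) (hg : Integrable g P) :
    ∫ ω, f ω * g ω ∂P = (∫ ω, f ω ∂P) * ∫ ω, g ω ∂P := by
  have hfm : AEMeasurable f P := hf.aemeasurable
  have hgm : AEMeasurable g P := hg.aemeasurable
  have hmap : P.map (fun ω => (f ω, g ω)) = (P.map f).prod (P.map g) :=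
    (indepFun_iff_map_prod_eq_prod_map_map hfm hgm).mp h
  have h1 : ∫ ω, f ω * g ω ∂P = ∫ p : ℂ × ℂ, p.1 * p.2 ∂((P.map f).prod (P.map g)) := by
    rw [← hmap, integral_map (f := fun p : ℂ × ℂ => p.1 * p.2) (hfm.prodMk hgm)
      ((continuous_fst.mul continuous_snd : Continuous fun p : ℂ × ℂ => p.1 * p.2).aestronglyMeasurable)]
  have : IsProbabilityMeasure (P.map f) := Measure.isProbabilityMeasure_map hfm
  have : IsProbabilityMeasure (P.map g) := Measure.isProbabilityMeasure_map hgm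
  rw [h1, integral_prod_mul (fun x : ℂ => x) (fun x : ℂ => x)]
  congr 1
  · exact integral_map hfm aestronglyMeasurable_id
  · exact integral_map hgm aestronglyMeasurable_id

lemma map_exp_moment {Ω : Type*} [MeasurableSpace Ω] {P : Measure Ω} {f : Ω → ℝ} {v : NNReal}
    (h : Measure.map f P = gaussianReal 0 v) (c : ℝ) :
    Integrable (fun ω => Real.exp (c * f ω)) P ∧
    ∫ ω, Real.exp (c * f ω) ∂P = Real.exp (c ^ 2 * v / 2) := by
  have hf : AEMeasurable f P := by
    by_contra hc
    rw [Measure.map_of_not_aemeasurable hc] at h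
    have h1 : (0 : Measure ℝ) Set.univ = 1 := by
      rw [h]; exact measure_univ
    simp at h1
  have hg : AEStronglyMeasurable (fun x : ℝ => Real.exp (c * x)) (Measure.map f P) :=
    (Real.continuous_exp.comp (continuous_const.mul continuous_id)).aestronglyMeasurable
  constructor
  · have := (gaussian_exp_moment c v).1
    rw [← h] at this
    exact (integrable_map_measure hg hf).mp this
  · rw [← integral_map hf hg, h]
    exact (gaussian_exp_moment c v).2

lemma integral_ofReal'' {Ω : Type*} [MeasurableSpace Ω] {P : Measure Ω} {f : Ω → ℝ} :
    ∫ ω, (f ω : ℂ) ∂P = ((∫ ω, f ω ∂P : ℝ) : ℂ) := integral_ofReal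

end helpers

open Complex in
/-- Mismatch interference power: for independent `t, r` with log-normal amplitudes and
independent uniform phases, `E[|t − α r|²] = e^{2δ_t²} + |α|²e^{2δ_r²} −
2·Re(α*)·sinc(θ_t)sinc(θ_r)e^{(δ_t²+δ_r²)/2}` for every complex `α`; in particular with
`α = sinc(θ_t)sinc(θ_r)e^{(δ_t²+δ_r²)/2}` it equals
`e^{2δ_t²} + sinc²(θ_t)sinc²(θ_r)e^{δ_t²+δ_r²}(e^{2δ_r²} − 2)`. -/
theorem stmt5 {Ω : Type*} [MeasurableSpace Ω] (P : Measure Ω) [IsProbabilityMeasure P]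
    (vt vr : NNReal) (θt θr : ℝ) (hθt : 0 < θt) (hθtπ : θt ≤ Real.pi)
    (hθr : 0 < θr) (hθrπ : θr ≤ Real.pi) (t r : Ω → ℂ)
    (htr : IndepFun t r P)
    (htamp : Measure.map (fun ω => Real.log (‖t ω‖)) P = gaussianReal 0 vt)
    (htph : Measure.map (fun ω => Complex.arg (t ω)) P = unifSym θt)
    (htind : IndepFun (fun ω => ‖t ω‖) (fun ω => Complex.arg (t ω)) P)
    (hramp : Measure.map (fun ω => Real.log (‖r ω‖)) P = gaussianReal 0 vr)
    (hrph : Measure.map (fun ω => Complex.arg (r ω)) P = unifSym θr)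
    (hrind : IndepFun (fun ω => ‖r ω‖) (fun ω => Complex.arg (r ω)) P) :
    (∀ α : ℂ,
      (∫ ω, ‖t ω - α * r ω‖ ^ 2 ∂P) =
        Real.exp (2 * (vt : ℝ)) + ‖α‖ ^ 2 * Real.exp (2 * (vr : ℝ))
          - 2 * α.re * (Real.sin θt / θt) * (Real.sin θr / θr)
            * Real.exp (((vt : ℝ) + (vr : ℝ)) / 2)) ∧
    (∫ ω, ‖t ω -
        ((Real.sin θt / θt) * (Real.sin θr / θr)
          * Real.exp (((vt : ℝ) + (vr : ℝ)) / 2) : ℝ) * r ω‖ ^ 2 ∂P) =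
      Real.exp (2 * (vt : ℝ)) + (Real.sin θt / θt) ^ 2 * (Real.sin θr / θr) ^ 2
        * Real.exp ((vt : ℝ) + (vr : ℝ)) * (Real.exp (2 * (vr : ℝ)) - 2) := by
  -- measurable phase maps
  have hphm : Measurable (fun x : ℝ => Complex.exp (↑x * I)) :=
    Complex.measurable_exp.comp (Complex.measurable_ofReal.mul_const I)
  have hmI : Measurable (fun x : ℝ => Complex.exp (I * ↑x)) :=
    Complex.measurable_exp.comp (Complex.measurable_ofReal.const_mul I)
  -- a.e.-measurability of the building blocks
  have hne : ∀ {f : Ω → ℂ} {θ : ℝ}, 0 < θ →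
      Measure.map (fun ω => Complex.arg (f ω)) P = unifSym θ →
      AEMeasurable (fun ω => Complex.arg (f ω)) P ∧ (∀ᵐ ω ∂P, f ω ≠ 0) := by
    intro f θ hθ hph
    have : IsProbabilityMeasure (unifSym θ) := unifSym_prob hθ
    have harg : AEMeasurable (fun ω => Complex.arg (f ω)) P := by
      by_contra hc
      rw [Measure.map_of_not_aemeasurable hc] at hph
      have h1 : (0 : Measure ℝ) Set.univ = 1 := by rw [hph]; exact measure_univ
      simp at h1
    refine ⟨harg, ?_⟩
    have hz : P {ω | Complex.arg (f ω) = 0} = 0 := by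
      have := Measure.map_apply_of_aemeasurable harg (measurableSet_singleton (0:ℝ))
      rw [hph] at this
      have h0 : unifSym θ {(0:ℝ)} = 0 := by
        rw [unifSym, Measure.smul_apply, Measure.restrict_apply (measurableSet_singleton _)]
        have : (volume : Measure ℝ) ({(0:ℝ)} ∩ Set.Ioc (-θ) θ) = 0 :=
          measure_mono_null Set.inter_subset_left (Real.volume_singleton)
        rw [this, smul_zero]
      rw [h0] at this
      exact this.symm
    have : ∀ᵐ ω ∂P, Complex.arg (f ω) ≠ 0 := by
      rw [ae_iff]; simpa using hz
    filter_upwards [this] with ω hω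
    intro hf0
    exact hω (by rw [hf0, Complex.arg_zero])
  obtain ⟨hptm, htne⟩ := hne hθt htph
  obtain ⟨hprm, hrne⟩ := hne hθr hrph
  have hltm : AEMeasurable (fun ω => Real.log (‖t ω‖)) P := by
    by_contra hc
    rw [Measure.map_of_not_aemeasurable hc] at htamp
    have h1 : (0 : Measure ℝ) Set.univ = 1 := by rw [htamp]; exact measure_univ
    simp at h1
  have hlrm : AEMeasurable (fun ω => Real.log (‖r ω‖)) P := by
    by_contra hc
    rw [Measure.map_of_not_aemeasurable hc] at hramp
    have h1 : (0 : Measure ℝ) Set.univ = 1 := by rw [hramp]; exact measure_univ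
    simp at h1
  have htexp : ∀ᵐ ω ∂P, ‖t ω‖ = Real.exp (Real.log (‖t ω‖)) :=
    htne.mono fun ω h => (Real.exp_log (norm_pos_iff.mpr h)).symm
  have hrexp : ∀ᵐ ω ∂P, ‖r ω‖ = Real.exp (Real.log (‖r ω‖)) :=
    hrne.mono fun ω h => (Real.exp_log (norm_pos_iff.mpr h)).symm
  have hatm : AEMeasurable (fun ω => ‖t ω‖) P :=
    (Real.measurable_exp.comp_aemeasurable hltm).congr (htexp.mono fun ω h => h.symm)
  have harm : AEMeasurable (fun ω => ‖r ω‖) P :=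
    (Real.measurable_exp.comp_aemeasurable hlrm).congr (hrexp.mono fun ω h => h.symm)
  have htm : AEMeasurable t P := by
    have : (fun ω => (↑(‖t ω‖) : ℂ) * Complex.exp (↑(Complex.arg (t ω)) * I)) = t :=
      funext fun ω => Complex.norm_mul_exp_arg_mul_I (t ω)
    rw [← this]
    exact (Complex.measurable_ofReal.comp_aemeasurable hatm).mul (hphm.comp_aemeasurable hptm)
  have hrm : AEMeasurable r P := by
    have : (fun ω => (↑(‖r ω‖) : ℂ) * Complex.exp (↑(Complex.arg (r ω)) * I)) = r :=
      funext fun ω => Complex.norm_mul_exp_arg_mul_I (r ω)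
    rw [← this]
    exact (Complex.measurable_ofReal.comp_aemeasurable harm).mul (hphm.comp_aemeasurable hprm)
  -- moments of amplitudes
  have hexp2 : ∀ x : ℝ, Real.exp (2 * x) = Real.exp x ^ 2 := fun x => by
    rw [sq, ← Real.exp_add]; ring_nf
  have hIt2 : Integrable (fun ω => ‖t ω‖ ^ 2) P := by
    refine ((map_exp_moment htamp 2).1).congr ?_
    filter_upwards [htexp] with ω h
    rw [hexp2, ← h]
  have hEt2 : ∫ ω, ‖t ω‖ ^ 2 ∂P = Real.exp (2 * (vt : ℝ)) := by
    have h1 : ∫ ω, Real.exp (2 * Real.log (‖t ω‖)) ∂P = Real.exp (2 ^ 2 * vt / 2) :=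
      (map_exp_moment htamp 2).2
    rw [show (2:ℝ) ^ 2 * vt / 2 = 2 * (vt:ℝ) by ring] at h1
    rw [← h1]
    refine integral_congr_ae ?_
    filter_upwards [htexp] with ω h
    rw [hexp2, ← h]
  have hIr2 : Integrable (fun ω => ‖r ω‖ ^ 2) P := by
    refine ((map_exp_moment hramp 2).1).congr ?_
    filter_upwards [hrexp] with ω h
    rw [hexp2, ← h]
  have hEr2 : ∫ ω, ‖r ω‖ ^ 2 ∂P = Real.exp (2 * (vr : ℝ)) := by
    have h1 : ∫ ω, Real.exp (2 * Real.log (‖r ω‖)) ∂P = Real.exp (2 ^ 2 * vr / 2) :=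
      (map_exp_moment hramp 2).2
    rw [show (2:ℝ) ^ 2 * vr / 2 = 2 * (vr:ℝ) by ring] at h1
    rw [← h1]
    refine integral_congr_ae ?_
    filter_upwards [hrexp] with ω h
    rw [hexp2, ← h]
  have hIt1 : Integrable (fun ω => ‖t ω‖) P := by
    refine ((map_exp_moment htamp 1).1).congr ?_
    filter_upwards [htexp] with ω h
    rw [one_mul, ← h]
  have hEt1 : ∫ ω, ‖t ω‖ ∂P = Real.exp ((vt : ℝ) / 2) := by
    have h1 : ∫ ω, Real.exp (1 * Real.log (‖t ω‖)) ∂P = Real.exp (1 ^ 2 * vt / 2) :=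
      (map_exp_moment htamp 1).2
    rw [show (1:ℝ) ^ 2 * vt / 2 = (vt:ℝ)/2 by ring] at h1
    rw [← h1]
    refine integral_congr_ae ?_
    filter_upwards [htexp] with ω h
    rw [one_mul, ← h]
  have hIr1 : Integrable (fun ω => ‖r ω‖) P := by
    refine ((map_exp_moment hramp 1).1).congr ?_
    filter_upwards [hrexp] with ω h
    rw [one_mul, ← h]
  have hEr1 : ∫ ω, ‖r ω‖ ∂P = Real.exp ((vr : ℝ) / 2) := by
    have h1 : ∫ ω, Real.exp (1 * Real.log (‖r ω‖)) ∂P = Real.exp (1 ^ 2 * vr / 2) :=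
      (map_exp_moment hramp 1).2
    rw [show (1:ℝ) ^ 2 * vr / 2 = (vr:ℝ)/2 by ring] at h1
    rw [← h1]
    refine integral_congr_ae ?_
    filter_upwards [hrexp] with ω h
    rw [one_mul, ← h]
  -- integrability of t and r
  have hIt : Integrable t P := by
    refine hIt1.mono' htm.aestronglyMeasurable ?_
    exact ae_of_all _ fun ω => le_rfl
  have hIr : Integrable r P := by
    refine hIr1.mono' hrm.aestronglyMeasurable ?_
    exact ae_of_all _ fun ω => le_rfl
  -- phase integrals
  have hphase_norm : ∀ x : ℝ, ‖Complex.exp (↑x * I)‖ = 1 := fun x => by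
    rw [Complex.norm_exp]
    simp
  have hIphT : Integrable (fun ω => Complex.exp (↑(Complex.arg (t ω)) * I)) P := by
    refine (integrable_const (1:ℝ)).mono' ((hphm.comp_aemeasurable hptm).aestronglyMeasurable) ?_
    exact ae_of_all _ fun ω => le_of_eq (hphase_norm _)
  have hIphR : Integrable (fun ω => Complex.exp (↑(Complex.arg (r ω)) * I)) P := by
    refine (integrable_const (1:ℝ)).mono' ((hphm.comp_aemeasurable hprm).aestronglyMeasurable) ?_
    exact ae_of_all _ fun ω => le_of_eq (hphase_norm _)
  have hPhT : ∫ ω, Complex.exp (↑(Complex.arg (t ω)) * I) ∂P = ((Real.sin θt / θt : ℝ) : ℂ) := by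
    have h1 : ∫ ω, Complex.exp (↑(Complex.arg (t ω)) * I) ∂P
        = ∫ ω, Complex.exp (I * ↑(Complex.arg (t ω))) ∂P := by
      congr 1; funext ω; rw [mul_comm]
    rw [h1, ← integral_map hptm hmI.aestronglyMeasurable, htph]
    exact unifSym_phase hθt
  have hPhR : ∫ ω, Complex.exp (↑(Complex.arg (r ω)) * I) ∂P = ((Real.sin θr / θr : ℝ) : ℂ) := by
    have h1 : ∫ ω, Complex.exp (↑(Complex.arg (r ω)) * I) ∂P
        = ∫ ω, Complex.exp (I * ↑(Complex.arg (r ω))) ∂P := by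
      congr 1; funext ω; rw [mul_comm]
    rw [h1, ← integral_map hprm hmI.aestronglyMeasurable, hrph]
    exact unifSym_phase hθr
  -- expectations of t and r
  have hIabsT : Integrable (fun ω => (↑(‖t ω‖) : ℂ)) P := hIt1.ofReal
  have hIabsR : Integrable (fun ω => (↑(‖r ω‖) : ℂ)) P := hIr1.ofReal
  have hEt : ∫ ω, t ω ∂P = ↑(Real.exp ((vt : ℝ)/2)) * ((Real.sin θt / θt : ℝ) : ℂ) := by
    have hdec : ∫ ω, t ω ∂P
        = ∫ ω, (↑(‖t ω‖) : ℂ) * Complex.exp (↑(Complex.arg (t ω)) * I) ∂P := by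
      congr 1; funext ω; rw [Complex.norm_mul_exp_arg_mul_I]
    have hind : IndepFun (fun ω => (↑(‖t ω‖) : ℂ))
        (fun ω => Complex.exp (↑(Complex.arg (t ω)) * I)) P :=
      htind.comp Complex.measurable_ofReal hphm
    rw [hdec, hind.integral_mul_complex hIabsT hIphT, integral_ofReal'', hEt1, hPhT]
  have hEr : ∫ ω, r ω ∂P = ↑(Real.exp ((vr : ℝ)/2)) * ((Real.sin θr / θr : ℝ) : ℂ) := by
    have hdec : ∫ ω, r ω ∂P
        = ∫ ω, (↑(‖r ω‖) : ℂ) * Complex.exp (↑(Complex.arg (r ω)) * I) ∂P := by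
      congr 1; funext ω; rw [Complex.norm_mul_exp_arg_mul_I]
    have hind : IndepFun (fun ω => (↑(‖r ω‖) : ℂ))
        (fun ω => Complex.exp (↑(Complex.arg (r ω)) * I)) P :=
      hrind.comp Complex.measurable_ofReal hphm
    rw [hdec, hind.integral_mul_complex hIabsR hIphR, integral_ofReal'', hEr1, hPhR]
  -- conj r
  have hIconjR : Integrable (fun ω => (starRingEnd ℂ) (r ω)) P := by
    refine hIr1.mono' (Complex.continuous_conj.comp_aestronglyMeasurable hrm.aestronglyMeasurable) ?_
    exact ae_of_all _ fun ω => by simp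
  have hEconjR : ∫ ω, (starRingEnd ℂ) (r ω) ∂P
      = ↑(Real.exp ((vr : ℝ)/2)) * ((Real.sin θr / θr : ℝ) : ℂ) := by
    rw [integral_conj, hEr, map_mul, Complex.conj_ofReal, Complex.conj_ofReal]
  -- cross term
  have hindTR : IndepFun t (fun ω => (starRingEnd ℂ) (r ω)) P :=
    htr.comp measurable_id Complex.continuous_conj.measurable
  have hIcross : Integrable (fun ω => t ω * (starRingEnd ℂ) (r ω)) P :=
    hindTR.integrable_mul hIt hIconjR
  have hcross : ∫ ω, t ω * (starRingEnd ℂ) (r ω) ∂P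
      = (↑(Real.exp ((vt : ℝ)/2)) * ((Real.sin θt / θt : ℝ) : ℂ))
        * (↑(Real.exp ((vr : ℝ)/2)) * ((Real.sin θr / θr : ℝ) : ℂ)) :=
    by rw [hindTR.integral_mul_complex hIt hIconjR, hEt, hEconjR]
  -- main formula for every α
  have main : ∀ α : ℂ,
      (∫ ω, ‖t ω - α * r ω‖ ^ 2 ∂P) =
        Real.exp (2 * (vt : ℝ)) + ‖α‖ ^ 2 * Real.exp (2 * (vr : ℝ))
          - 2 * α.re * (Real.sin θt / θt) * (Real.sin θr / θr)
            * Real.exp (((vt : ℝ) + (vr : ℝ)) / 2) := by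
    intro α
    have hpt : ∀ ω, ‖t ω - α * r ω‖ ^ 2
        = ‖t ω‖ ^ 2 + ‖α‖ ^ 2 * ‖r ω‖ ^ 2
          - 2 * ((starRingEnd ℂ) α * (t ω * (starRingEnd ℂ) (r ω))).re := by
      intro ω
      rw [Complex.sq_norm, Complex.sq_norm, Complex.sq_norm, Complex.sq_norm,
        Complex.normSq_sub, Complex.normSq_mul, map_mul, mul_left_comm]
    have hIcc : Integrable (fun ω => ((starRingEnd ℂ) α * (t ω * (starRingEnd ℂ) (r ω))).re) P := by
      have := (hIcross.const_mul ((starRingEnd ℂ) α)).re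
      simpa using this
    have hsplit : ∫ ω, ‖t ω - α * r ω‖ ^ 2 ∂P
        = (∫ ω, ‖t ω‖ ^ 2 ∂P)
          + ‖α‖ ^ 2 * (∫ ω, ‖r ω‖ ^ 2 ∂P)
          - 2 * ∫ ω, ((starRingEnd ℂ) α * (t ω * (starRingEnd ℂ) (r ω))).re ∂P := by
      have hIconst : Integrable (fun ω => ‖α‖ ^ 2 * ‖r ω‖ ^ 2) P :=
        hIr2.const_mul _
      have hIsum : Integrable
          (fun ω => ‖t ω‖ ^ 2 + ‖α‖ ^ 2 * ‖r ω‖ ^ 2) P :=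
        hIt2.add hIconst
      have hI2c : Integrable
          (fun ω => 2 * ((starRingEnd ℂ) α * (t ω * (starRingEnd ℂ) (r ω))).re) P :=
        hIcc.const_mul 2
      simp_rw [hpt]
      rw [integral_sub hIsum hI2c, integral_add hIt2 hIconst, integral_const_mul,
        integral_const_mul]
    have hre : ∫ ω, ((starRingEnd ℂ) α * (t ω * (starRingEnd ℂ) (r ω))).re ∂P
        = α.re * (Real.exp ((vt : ℝ)/2) * (Real.sin θt / θt)
            * (Real.exp ((vr : ℝ)/2) * (Real.sin θr / θr))) := by
      have h1 := integral_re (hIcross.const_mul ((starRingEnd ℂ) α))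
      simp only [RCLike.re_to_complex] at h1
      rw [h1, integral_const_mul, hcross]
      simp only [← Complex.ofReal_mul, Complex.mul_re, Complex.ofReal_re, Complex.ofReal_im,
        Complex.conj_re, Complex.conj_im, mul_zero, sub_zero]
    rw [hsplit, hEt2, hEr2, hre]
    have hEE : Real.exp ((vt:ℝ)/2) * Real.exp ((vr:ℝ)/2) = Real.exp (((vt:ℝ)+(vr:ℝ))/2) := by
      rw [← Real.exp_add]; ring_nf
    linear_combination (-2 * α.re * (Real.sin θt / θt) * (Real.sin θr / θr)) * hEE
  refine ⟨main, ?_⟩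
  have h := main (((Real.sin θt / θt) * (Real.sin θr / θr)
    * Real.exp (((vt : ℝ) + (vr : ℝ)) / 2) : ℝ) : ℂ)
  rw [h]
  have habs : ‖(((Real.sin θt / θt) * (Real.sin θr / θr)
      * Real.exp (((vt : ℝ) + (vr : ℝ)) / 2) : ℝ) : ℂ)‖ ^ 2
      = ((Real.sin θt / θt) * (Real.sin θr / θr) * Real.exp (((vt : ℝ) + (vr : ℝ)) / 2)) ^ 2 := by
    rw [Complex.sq_norm, Complex.normSq_ofReal, sq]
  rw [habs, Complex.ofReal_re]
  have hE2 : Real.exp (((vt : ℝ) + (vr : ℝ)) / 2) ^ 2 = Real.exp ((vt : ℝ) + (vr : ℝ)) := by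
    rw [sq, ← Real.exp_add]; ring_nf
  linear_combination ((Real.sin θt / θt) ^ 2 * (Real.sin θr / θr) ^ 2
    * (Real.exp (2 * (vr : ℝ)) - 2)) * hE2
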